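/- Let g be the 2-dimensional Lie algebra with [X₁,X₂] = X₁, graded by V₀ = span{X₂}, V₁ = span{X₁}. Using the semigroup S_N3 (λ1λ2=λ1, λ2λ2=λ2, λ2λ3=λ3, all other products λ4, with λ4 zero) with resonant decomposition S₀={λ2,λ4}, S₁={λ1,λ3,λ4}, the 0_S-reduced resonant subalgebra has basis Y₁=λ1⊗X₁, Y₂=λ3⊗X₁, Y₃=λ2⊗X₂ satisfying [Y₁,Y₂]=0, [Y₁,Y₃]=Y₁, [Y₂,Y₃]=Y₂, i.e., it is isomorphic to the Bianchi type V algebra. -/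

import Mathlib

/-- The multiplication table of the semigroup `S_N3` on `{λ1,...,λ4}`, encoded
with `λ_{i+1} ↔ (i : Fin 4)`. -/
def mulSN3 : Fin 4 → Fin 4 → Fin 4 :=
  ![![3, 0, 3, 3],
    ![0, 1, 2, 3],
    ![3, 2, 3, 3],
    ![3, 3, 3, 3]]

/-- The bracket of the expanded algebra on `Fin 4 → g` associated to an explicit
multiplication table `mul`. -/
def exBr (mul : Fin 4 → Fin 4 → Fin 4) {g : Type*} [LieRing g]
    (f₁ f₂ : Fin 4 → g) : Fin 4 → g :=
  fun γ => ∑ p : Fin 4 × Fin 4, if mul p.1 p.2 = γ then ⁅f₁ p.1, f₂ p.2⁆ else 0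

/-- The basis element `λ ⊗ x`, as the function supported at `λ`. -/
def basE {S : Type*} [DecidableEq S] {g : Type*} [Zero g] (l : S) (x : g) : S → g :=
  fun μ => if μ = l then x else 0

/-- Let `g` be the 2-dimensional Lie algebra with `[X₁,X₂] = X₁`, graded by
`V₀ = span{X₂}`, `V₁ = span{X₁}`.  Using the semigroup `S_N3` with resonant
decomposition `S₀ = {λ2,λ4}`, `S₁ = {λ1,λ3,λ4}`, the `0_S`-reduced resonant
subalgebra has basis `Y₁ = λ1⊗X₁`, `Y₂ = λ3⊗X₁`, `Y₃ = λ2⊗X₂` satisfying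
`[Y₁,Y₂] = 0`, `[Y₁,Y₃] = Y₁`, `[Y₂,Y₃] = Y₂`, i.e. it is (isomorphic to) the
Bianchi type V algebra. -/
theorem stmt10 (K : Type*) [Field K] (g : Type*) [LieRing g] [LieAlgebra K g]
    (X₁ X₂ : g) (hli : LinearIndependent K ![X₁, X₂])
    (hspan : Submodule.span K {X₁, X₂} = ⊤)
    (hbr : ⁅X₁, X₂⁆ = X₁) :
    let Y₁ : Fin 4 → g := basE 0 X₁
    let Y₂ : Fin 4 → g := basE 2 X₁
    let Y₃ : Fin 4 → g := basE 1 X₂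
    -- the ideal `λ4 ⊗ g` giving the `0_S`-reduction
    let I : Submodule K (Fin 4 → g) :=
      Submodule.span K {f | ∃ x : g, f = basE 3 x}
    -- the resonant subalgebra `(S₀ × V₀) ⊕ (S₁ × V₁)`
    let R : Submodule K (Fin 4 → g) :=
      Submodule.span K {basE 1 X₂, basE 3 X₂, basE 0 X₁, basE 2 X₁, basE 3 X₁}
    (exBr mulSN3 Y₁ Y₂ ∈ I) ∧
    (exBr mulSN3 Y₁ Y₃ - Y₁ ∈ I) ∧
    (exBr mulSN3 Y₂ Y₃ - Y₂ ∈ I) ∧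
    LinearIndependent K ![I.mkQ Y₁, I.mkQ Y₂, I.mkQ Y₃] ∧
    Submodule.span K {I.mkQ Y₁, I.mkQ Y₂, I.mkQ Y₃} = R.map I.mkQ := by
  intro Y₁ Y₂ Y₃ I R
  have hX₁ : X₁ ≠ 0 := by
    have := hli.ne_zero 0; simpa using this
  have hX₂ : X₂ ≠ 0 := by
    have := hli.ne_zero 1; simpa using this
  -- I vanishes on coordinates 0,1,2
  have hIeval : ∀ f ∈ I, ∀ i : Fin 4, i ≠ 3 → f i = 0 := by
    intro f hf i hi
    have : I ≤ LinearMap.ker (LinearMap.proj (R := K) (φ := fun _ : Fin 4 => g) i) := by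
      apply Submodule.span_le.2
      rintro _ ⟨x, rfl⟩
      simp [LinearMap.mem_ker, basE, hi]
    simpa using this hf
  have hb3 : ∀ x : g, basE (3 : Fin 4) x ∈ I := fun x =>
    Submodule.subset_span ⟨x, rfl⟩
  have h1 : exBr mulSN3 Y₁ Y₂ = 0 := by
    funext γ
    simp [exBr, Fintype.sum_prod_type, Fin.sum_univ_four, Y₁, Y₂, basE, mulSN3]
  have h2 : exBr mulSN3 Y₁ Y₃ = Y₁ := by
    funext γ
    simp [exBr, Fintype.sum_prod_type, Fin.sum_univ_four, Y₁, Y₃, basE, mulSN3, hbr, eq_comm]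
  have h3 : exBr mulSN3 Y₂ Y₃ = Y₂ := by
    funext γ
    simp [exBr, Fintype.sum_prod_type, Fin.sum_univ_four, Y₂, Y₃, basE, mulSN3, hbr, eq_comm]
  refine ⟨by simp [h1], by simp [h2], by simp [h3], ?_, ?_⟩
  · rw [Fintype.linearIndependent_iff]
    intro c hc
    have hmem : c 0 • Y₁ + c 1 • Y₂ + c 2 • Y₃ ∈ I := by
      rw [← Submodule.Quotient.mk_eq_zero]
      have : ∑ i : Fin 3, c i • ![I.mkQ Y₁, I.mkQ Y₂, I.mkQ Y₃] i = 0 := hc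
      rw [Fin.sum_univ_three] at this
      simpa [Submodule.Quotient.mk_eq_zero, ← Submodule.mkQ_apply] using this
    intro i
    fin_cases i
    · have := hIeval _ hmem 0 (by decide)
      have h : c 0 • X₁ = 0 := by simpa [Y₁, Y₂, Y₃, basE] using this
      rcases smul_eq_zero.1 h with h | h
      · exact h
      · exact absurd h hX₁
    · have := hIeval _ hmem 2 (by decide)
      have h : c 1 • X₁ = 0 := by simpa [Y₁, Y₂, Y₃, basE] using this
      rcases smul_eq_zero.1 h with h | h
      · exact h
      · exact absurd h hX₁
    · have := hIeval _ hmem 1 (by decide)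
      have h : c 2 • X₂ = 0 := by simpa [Y₁, Y₂, Y₃, basE] using this
      rcases smul_eq_zero.1 h with h | h
      · exact h
      · exact absurd h hX₂
  · rw [Submodule.map_span]
    apply le_antisymm
    · apply Submodule.span_le.2
      rintro x (rfl | rfl | rfl)
      · exact Submodule.subset_span ⟨Y₁, by simp [Y₁], rfl⟩
      · exact Submodule.subset_span ⟨Y₂, by simp [Y₂], rfl⟩
      · exact Submodule.subset_span ⟨Y₃, by simp [Y₃], rfl⟩
    · apply Submodule.span_le.2
      rintro _ ⟨y, (rfl | rfl | rfl | rfl | rfl), rfl⟩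
      · exact Submodule.subset_span (by simp [Y₁, Y₂, Y₃])
      · have : I.mkQ (basE 3 X₂) = 0 := by
          simpa [Submodule.mkQ_apply, Submodule.Quotient.mk_eq_zero] using hb3 X₂
        simp [this]
      · exact Submodule.subset_span (by simp [Y₁, Y₂, Y₃])
      · exact Submodule.subset_span (by simp [Y₁, Y₂, Y₃])
      · have : I.mkQ (basE 3 X₁) = 0 := by
          simpa [Submodule.mkQ_apply, Submodule.Quotient.mk_eq_zero] using hb3 X₁
        simp [this]
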